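/- Let G be a finite group, χ the character of a faithful finite-dimensional complex representation of G, and d ≥ 2 an integer. Let I : (0,∞) → ℝ satisfy: I(β) ≥ 0 for all β > 0; there is a constant C > 0 with I(β) ≤ C β^{1−d} for all β > 0; and lim_{β→0⁺} β^{d−1} I(β) = c for some c > 0. For β > 0 and g ∈ G define Z(β,g) = exp(Σ_{n=1}^∞ (1/n)(χ(gⁿ) + conj(χ(gⁿ))) I(nβ)) (the series converges absolutely). Then for every irreducible complex representation α of G with character χ_α, lim_{β→0⁺} [(dim α/|G|) Σ_{g∈G} conj(χ_α(g)) Z(β,g)] / Z(β,1) = dim(α)²/|G|, where 1 is the identity of G. -/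

import Mathlib

/-- The `n`-th term (indexing `n : ℕ` corresponds to `n + 1 ≥ 1`) of the plethystic exponent:
`(1/n)(χ(gⁿ) + conj χ(gⁿ)) I(nβ)`, where `I` is a single-particle partition function. -/
noncomputable def plethTerm {G : Type*} [Group G] (χ : G → ℂ) (I : ℝ → ℝ)
    (β : ℝ) (g : G) (n : ℕ) : ℂ :=
  (1 / ((n : ℂ) + 1)) * (χ (g ^ (n + 1)) + star (χ (g ^ (n + 1)))) *
    ((I (((n : ℝ) + 1) * β) : ℝ) : ℂ)

/-- The plethystic exponential `Z(β, g) = exp (Σ_{n≥1} (1/n)(χ(gⁿ) + conj χ(gⁿ)) I(nβ))`. -/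
noncomputable def plethZ {G : Type*} [Group G] (χ : G → ℂ) (I : ℝ → ℝ)
    (β : ℝ) (g : G) : ℂ :=
  Complex.exp (∑' n : ℕ, plethTerm χ I β g n)

open Polynomial Matrix Filter

section MatrixAux

lemma pleth_root_pow_eq_one {N : ℕ} {M0 : Matrix (Fin N) (Fin N) ℂ} {m : ℕ}
    (h1 : M0 ^ m = 1) {lam : ℂ} (hlam : lam ∈ M0.charpoly.roots) : lam ^ m = 1 := by
  have hroot : IsRoot M0.charpoly lam := (Polynomial.mem_roots'.mp hlam).2
  have hdet : (Matrix.scalar (Fin N) lam - M0).det = 0 := by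
    have := hroot.eq_zero
    rwa [Matrix.charpoly, _root_.eval_det, Matrix.matPolyEquiv_charmatrix,
      Polynomial.eval_sub, Polynomial.eval_X, Polynomial.eval_C] at this
  obtain ⟨v, hv0, hv⟩ := Matrix.exists_mulVec_eq_zero_iff.mpr hdet
  have hMv : M0 *ᵥ v = lam • v := by
    have h2 : Matrix.scalar (Fin N) lam *ᵥ v - M0 *ᵥ v = 0 := by
      rw [← Matrix.sub_mulVec]; exact hv
    have h3 : Matrix.scalar (Fin N) lam *ᵥ v = lam • v := by
      ext i; simp [Matrix.scalar, Matrix.mulVec_diagonal]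
    rw [h3, sub_eq_zero] at h2
    exact h2.symm
  have key : ∀ k : ℕ, (M0 ^ k) *ᵥ v = lam ^ k • v := by
    intro k
    induction k with
    | zero => simp
    | succ k ih =>
      rw [pow_succ', ← Matrix.mulVec_mulVec, ih, Matrix.mulVec_smul, hMv,
        smul_smul, ← pow_succ]
  have h4 : v = lam ^ m • v := by rw [← key, h1, Matrix.one_mulVec]
  have h5 : (lam ^ m - 1) • v = 0 := by rw [sub_smul, one_smul, ← h4, sub_self]
  rcases smul_eq_zero.mp h5 with h | h
  · exact sub_eq_zero.mp h
  · exact absurd h hv0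

lemma pleth_abs_of_roots_one {N : ℕ} {M0 : Matrix (Fin N) (Fin N) ℂ} {m : ℕ} (hm : m ≠ 0)
    (h1 : M0 ^ m = 1) {lam : ℂ} (hlam : lam ∈ M0.charpoly.roots) : ‖lam‖ = 1 := by
  have hpow := pleth_root_pow_eq_one h1 hlam
  have h2 : ‖lam‖ ^ m = 1 := by rw [← norm_pow, hpow, norm_one]
  rcases lt_trichotomy (‖lam‖) 1 with h | h | h
  · exact absurd h2 (by nlinarith [pow_lt_one₀ (norm_nonneg lam) h hm])
  · exact h
  · exact absurd h2 (by nlinarith [one_lt_pow₀ h hm])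

lemma pleth_card_roots_charpoly {N : ℕ} (M0 : Matrix (Fin N) (Fin N) ℂ) :
    M0.charpoly.roots.card = N := by
  rw [(Polynomial.splits_iff_card_roots).mp (IsAlgClosed.splits _),
    Matrix.charpoly_natDegree_eq_dim, Fintype.card_fin]

lemma pleth_trace_abs_le {N : ℕ} {M0 : Matrix (Fin N) (Fin N) ℂ} {m : ℕ} (hm : m ≠ 0)
    (h1 : M0 ^ m = 1) : ‖M0.trace‖ ≤ N := by
  calc ‖M0.trace‖ = ‖M0.charpoly.roots.sum‖ := by
        rw [Matrix.trace_eq_sum_roots_charpoly]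
    _ ≤ (M0.charpoly.roots.map (fun z => ‖z‖)).sum := norm_multiset_sum_le _
    _ ≤ (M0.charpoly.roots.map (fun z => ‖z‖)).card • (1 : ℝ) := by
        refine Multiset.sum_le_card_nsmul _ _ ?_
        intro x hx
        obtain ⟨z, hz, rfl⟩ := Multiset.mem_map.mp hx
        rw [pleth_abs_of_roots_one hm h1 hz]
    _ = N := by rw [Multiset.card_map, pleth_card_roots_charpoly]; simp

lemma pleth_trace_re_lt {N : ℕ} {M0 : Matrix (Fin N) (Fin N) ℂ} {m : ℕ} (hm : m ≠ 0)
    (h1 : M0 ^ m = 1) (hne : M0 ≠ 1) : M0.trace.re < N := by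
  have hN : N ≠ 0 := by
    rintro rfl
    exact hne (by ext i j; exact i.elim0)
  haveI : Nonempty (Fin N) := ⟨⟨0, Nat.pos_of_ne_zero hN⟩⟩
  have hcard := pleth_card_roots_charpoly M0
  by_cases hex : ∃ lam ∈ M0.charpoly.roots, lam ≠ 1
  · obtain ⟨lam0, hmem, hne0⟩ := hex
    have habs0 : ‖lam0‖ = 1 := pleth_abs_of_roots_one hm h1 hmem
    have hre0 : lam0.re < 1 := by
      rcases lt_or_eq_of_le ((Complex.re_le_norm lam0).trans habs0.le) with h | h
      · exact h
      · exfalso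
        apply hne0
        have hsq : lam0.re ^ 2 + lam0.im ^ 2 = 1 := by
          have := Complex.sq_norm lam0
          rw [habs0] at this
          simpa [Complex.normSq_apply, sq] using this.symm
        have him : lam0.im = 0 := by nlinarith
        exact Complex.ext (by rw [h]; rfl) (by simp [him])
    obtain ⟨s, hs⟩ := Multiset.exists_cons_of_mem hmem
    have htr : M0.trace.re = ((M0.charpoly.roots).map Complex.re).sum := by
      rw [Matrix.trace_eq_sum_roots_charpoly]
      simpa [Complex.coe_reAddGroupHom] using
        map_multiset_sum Complex.reAddGroupHom M0.charpoly.roots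
    have hsum : (s.map Complex.re).sum ≤ (s.map Complex.re).card • (1 : ℝ) := by
      refine Multiset.sum_le_card_nsmul _ _ ?_
      intro x hx
      obtain ⟨z, hz, rfl⟩ := Multiset.mem_map.mp hx
      have : z ∈ M0.charpoly.roots := by rw [hs]; exact Multiset.mem_cons_of_mem hz
      exact (Complex.re_le_norm z).trans (pleth_abs_of_roots_one hm h1 this).le
    have hcard2 : Multiset.card s + 1 = N := by
      rw [hs, Multiset.card_cons] at hcard; omega
    rw [htr, hs, Multiset.map_cons, Multiset.sum_cons]
    have hcs : ((s.map Complex.re).card • (1:ℝ)) = Multiset.card s := by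
      rw [Multiset.card_map]; simp
    rw [hcs] at hsum
    have : ((Multiset.card s : ℝ) + 1) = (N : ℝ) := by exact_mod_cast hcard2
    linarith
  · push_neg at hex
    have hmonic := M0.charpoly_monic
    have hsplit : M0.charpoly.Splits := IsAlgClosed.splits M0.charpoly
    have heq := hsplit.eq_prod_roots_of_monic hmonic
    have hrepl : M0.charpoly.roots.map (fun a => X - C a)
        = Multiset.replicate N (X - C (1:ℂ)) := by
      have hmc : M0.charpoly.roots.map (fun a => X - C a)
          = M0.charpoly.roots.map (fun _ => X - C (1:ℂ)) :=
        Multiset.map_congr rfl (fun x hx => by rw [hex x hx])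
      rw [hmc, Multiset.map_const', hcard]
    rw [hrepl, Multiset.prod_replicate] at heq
    have hint : IsIntegral ℂ M0 := IsIntegral.of_finite ℂ M0
    have hd1 : minpoly ℂ M0 ∣ (X - C (1:ℂ)) ^ N := by
      rw [← heq]; exact minpoly.dvd ℂ M0 (Matrix.aeval_self_charpoly M0)
    have hd2 : minpoly ℂ M0 ∣ X ^ m - 1 := by
      refine minpoly.dvd ℂ M0 ?_
      rw [map_sub, map_pow, aeval_X, _root_.map_one, h1, sub_self]
    obtain ⟨j, hjle, hassoc⟩ := (dvd_prime_pow (Polynomial.prime_X_sub_C (1:ℂ)) N).mp hd1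
    have hmin : minpoly ℂ M0 = (X - C (1:ℂ)) ^ j :=
      Polynomial.eq_of_monic_of_associated (minpoly.monic hint)
        ((Polynomial.monic_X_sub_C (1:ℂ)).pow _) hassoc
    have hj0 : j ≠ 0 := by
      rintro rfl
      rw [pow_zero] at hmin
      exact minpoly.ne_one ℂ M0 hmin
    have hj1 : j = 1 := by
      by_contra hj
      have h2le : 2 ≤ j := by omega
      have hsq : Squarefree (X ^ m - 1 : Polynomial ℂ) :=
        (Polynomial.X_pow_sub_one_separable_iff.mpr
          (by exact_mod_cast (Nat.cast_ne_zero (R := ℂ)).mpr hm)).squarefree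
      have hdvd : (X - C (1:ℂ)) * (X - C (1:ℂ)) ∣ (X ^ m - 1 : Polynomial ℂ) := by
        refine dvd_trans ?_ hd2
        rw [hmin, ← sq]
        exact pow_dvd_pow _ h2le
      exact (Polynomial.not_isUnit_X_sub_C (1:ℂ)) (hsq _ hdvd)
    exfalso
    apply hne
    have haev := minpoly.aeval ℂ M0
    rw [hmin, hj1, pow_one, map_sub, aeval_X, aeval_C, _root_.map_one, sub_eq_zero] at haev
    exact haev

end MatrixAux

section RepAux
variable {G : Type*} [Group G] [Fintype G]
variable {V : Type*} [AddCommGroup V] [Module ℂ V] [FiniteDimensional ℂ V]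
variable (ρ : Representation ℂ G V)

lemma pleth_rep_matrix (h : G) :
    ∃ M0 : Matrix (Fin (Module.finrank ℂ V)) (Fin (Module.finrank ℂ V)) ℂ,
      M0 ^ orderOf h = 1 ∧ Matrix.trace M0 = LinearMap.trace ℂ V (ρ h) ∧
      (ρ h ≠ 1 → M0 ≠ 1) := by
  set b := Module.finBasis ℂ V
  set e := LinearMap.toMatrixAlgEquiv b with he
  refine ⟨e (ρ h), ?_, ?_, ?_⟩
  · rw [← map_pow, ← map_pow, pow_orderOf_eq_one, _root_.map_one, _root_.map_one]
  · rw [LinearMap.trace_eq_matrix_trace ℂ b (ρ h)]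
    rfl
  · intro hne heq
    apply hne
    apply e.injective
    rw [heq, _root_.map_one]

lemma pleth_rep_abs_trace_le (h : G) :
    ‖LinearMap.trace ℂ V (ρ h)‖ ≤ Module.finrank ℂ V := by
  obtain ⟨M0, hM, htr, -⟩ := pleth_rep_matrix ρ h
  rw [← htr]
  exact pleth_trace_abs_le (orderOf_pos h).ne' hM

lemma pleth_rep_re_trace_le (h : G) :
    (LinearMap.trace ℂ V (ρ h)).re ≤ Module.finrank ℂ V :=
  le_trans (Complex.re_le_norm _) (pleth_rep_abs_trace_le ρ h)

lemma pleth_rep_re_trace_lt (h : G) (hne : ρ h ≠ 1) :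
    (LinearMap.trace ℂ V (ρ h)).re < Module.finrank ℂ V := by
  obtain ⟨M0, hM, htr, hne'⟩ := pleth_rep_matrix ρ h
  rw [← htr]
  exact pleth_trace_re_lt (orderOf_pos h).ne' hM (hne' hne)

end RepAux

section AnalysisAux
variable {G : Type*} [Group G]

/-- real form of the plethystic term -/
noncomputable def rT (χ : G → ℂ) (I : ℝ → ℝ) (β : ℝ) (g : G) (n : ℕ) : ℝ :=
  (1 / ((n : ℝ) + 1)) * (2 * (χ (g ^ (n + 1))).re) * I (((n : ℝ) + 1) * β)

lemma plethTerm_eq_rT (χ : G → ℂ) (I : ℝ → ℝ) (β : ℝ) (g : G) (n : ℕ) :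
    plethTerm χ I β g n = ((rT χ I β g n : ℝ) : ℂ) := by
  have h : χ (g ^ (n + 1)) + star (χ (g ^ (n + 1)))
      = ((2 * (χ (g ^ (n + 1))).re : ℝ) : ℂ) := by
    rw [Complex.star_def, Complex.add_conj]
  rw [plethTerm, rT, h]
  push_cast
  ring

lemma summable_pow_neg_d {d : ℕ} (hd : 2 ≤ d) :
    Summable (fun n : ℕ => ((n : ℝ) + 1) ^ (-(d : ℝ))) := by
  have h1 : Summable (fun n : ℕ => (n : ℝ) ^ (-(d : ℝ))) := by
    refine Real.summable_nat_rpow.mpr ?_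
    have : (2 : ℝ) ≤ (d : ℝ) := by exact_mod_cast hd
    linarith
  have h2 := h1.comp_injective (Nat.succ_injective)
  refine h2.congr fun n => ?_
  simp only [Function.comp_apply, Nat.succ_eq_add_one]
  push_cast
  ring_nf

lemma rT_abs_le {χ : G → ℂ} {I : ℝ → ℝ} {F : ℕ} (hχ : ∀ h : G, ‖χ h‖ ≤ F)
    {C : ℝ} {d : ℕ}
    (hI0 : ∀ β : ℝ, 0 < β → 0 ≤ I β)
    (hCle : ∀ β : ℝ, 0 < β → I β ≤ C * β ^ (1 - (d : ℝ)))
    {β : ℝ} (hβ : 0 < β) (g : G) (n : ℕ) :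
    |rT χ I β g n| ≤ (2 * F * C * β ^ (1 - (d : ℝ))) * ((n : ℝ) + 1) ^ (-(d : ℝ)) := by
  set x : ℝ := (n : ℝ) + 1 with hx
  have hx0 : 0 < x := by positivity
  have hxβ : 0 < x * β := by positivity
  have h1 : |rT χ I β g n| = (1 / x) * |2 * (χ (g ^ (n + 1))).re| * I (x * β) := by
    rw [rT, abs_mul, abs_mul, abs_of_nonneg (by positivity : (0:ℝ) ≤ 1 / x),
      abs_of_nonneg (hI0 _ hxβ)]
  have h2 : |2 * (χ (g ^ (n + 1))).re| ≤ 2 * F := by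
    rw [abs_mul, abs_of_nonneg (by norm_num : (0:ℝ) ≤ 2)]
    have := (Complex.abs_re_le_norm (χ (g ^ (n + 1)))).trans (hχ (g ^ (n + 1)))
    linarith
  have h3 : (1 / x) * |2 * (χ (g ^ (n + 1))).re| * I (x * β)
      ≤ (1 / x) * (2 * F) * (C * (x * β) ^ (1 - (d : ℝ))) := by
    have hI := hCle _ hxβ
    have hInn := hI0 _ hxβ
    gcongr
  have h4 : (1 / x) * (2 * F) * (C * (x * β) ^ (1 - (d : ℝ)))
      = (2 * F * C * β ^ (1 - (d : ℝ))) * x ^ (-(d : ℝ)) := by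
    rw [Real.mul_rpow hx0.le hβ.le,
      show (1 : ℝ) - (d : ℝ) = 1 + -(d : ℝ) by ring, Real.rpow_add hx0, Real.rpow_one,
      Real.rpow_add hβ]
    field_simp
  rw [h1]
  exact h3.trans (le_of_eq h4)

lemma pleth_I_tendsto_atTop {I : ℝ → ℝ} {d : ℕ} (hd : 2 ≤ d) {c : ℝ} (hc : 0 < c)
    (hIlim : Filter.Tendsto (fun β : ℝ => β ^ (d - 1) * I β)
      (nhdsWithin 0 (Set.Ioi 0)) (nhds c)) :
    Tendsto I (nhdsWithin 0 (Set.Ioi 0)) atTop := by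
  have hpow : Tendsto (fun β : ℝ => β ^ (d - 1)) (nhdsWithin 0 (Set.Ioi 0))
      (nhdsWithin 0 (Set.Ioi 0)) := by
    rw [tendsto_nhdsWithin_iff]
    constructor
    · have h0 : ((0:ℝ)) ^ (d - 1) = 0 := zero_pow (by omega)
      have h1 : Tendsto (fun β : ℝ => β ^ (d - 1)) (nhdsWithin 0 (Set.Ioi 0))
          (nhds ((0:ℝ) ^ (d - 1))) :=
        ((continuous_pow (d - 1)).tendsto (0:ℝ)).mono_left nhdsWithin_le_nhds
      rwa [h0] at h1
    · filter_upwards [self_mem_nhdsWithin] with β hβ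
      exact pow_pos (show (0:ℝ) < β from hβ) _
  have hinv : Tendsto (fun β : ℝ => (β ^ (d - 1))⁻¹) (nhdsWithin 0 (Set.Ioi 0)) atTop :=
    hpow.inv_tendsto_nhdsGT_zero
  have hmul : Tendsto (fun β : ℝ => (c / 2) * (β ^ (d - 1))⁻¹)
      (nhdsWithin 0 (Set.Ioi 0)) atTop := hinv.const_mul_atTop (half_pos hc)
  refine tendsto_atTop_mono' _ ?_ hmul
  have hev : ∀ᶠ β in nhdsWithin 0 (Set.Ioi 0), c / 2 < β ^ (d - 1) * I β :=
    hIlim.eventually (eventually_gt_nhds (half_lt_self hc))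
  filter_upwards [hev, self_mem_nhdsWithin] with β h1 h2
  have hp : 0 < β ^ (d - 1) := pow_pos (show (0:ℝ) < β from h2) _
  rw [show c / 2 * (β ^ (d - 1))⁻¹ = c / 2 / (β ^ (d - 1)) by ring, div_le_iff₀ hp]
  nlinarith

end AnalysisAux

/-- Let `χ` be the character of a faithful finite-dimensional complex
representation of a finite group `G`, `d ≥ 2`, and let `I : (0,∞) → ℝ` be a single-particle
partition function with `I ≥ 0`, `I(β) ≤ C β^{1-d}` and `β^{d-1} I(β) → c > 0` as `β → 0⁺`.
Then the series defining the plethystic exponential converges absolutely, and for every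
irreducible complex representation `α` of `G` the reduced partition function satisfies
`[(dim α/|G|) Σ_g conj(χ_α g) Z(β, g)] / Z(β, 1) → dim(α)²/|G|` as `β → 0⁺`. -/
theorem pleth_reduced_partition_limit
    {G : Type*} [Group G] [Fintype G]
    {V : Type*} [AddCommGroup V] [Module ℂ V] [FiniteDimensional ℂ V]
    (ρ : Representation ℂ G V) (hfaith : Function.Injective ρ)
    (d : ℕ) (hd : 2 ≤ d) (I : ℝ → ℝ)
    (hI0 : ∀ β : ℝ, 0 < β → 0 ≤ I β)
    (hIC : ∃ C : ℝ, 0 < C ∧ ∀ β : ℝ, 0 < β → I β ≤ C * β ^ (1 - (d : ℝ)))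
    (c : ℝ) (hc : 0 < c)
    (hIlim : Filter.Tendsto (fun β : ℝ => β ^ (d - 1) * I β)
      (nhdsWithin 0 (Set.Ioi 0)) (nhds c))
    {W : Type*} [AddCommGroup W] [Module ℂ W] [FiniteDimensional ℂ W]
    (α : Representation ℂ G W)
    (hα : IsSimpleModule (MonoidAlgebra ℂ G) α.asModule) :
    (∀ β : ℝ, 0 < β → ∀ g : G,
      Summable (fun n : ℕ =>
        ‖plethTerm (fun h => LinearMap.trace ℂ V (ρ h)) I β g n‖)) ∧
    Filter.Tendsto
      (fun β : ℝ =>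
        (((Module.finrank ℂ W : ℂ) / (Fintype.card G : ℂ)) *
            ∑ g : G, star (LinearMap.trace ℂ W (α g)) *
              plethZ (fun h => LinearMap.trace ℂ V (ρ h)) I β g) /
          plethZ (fun h => LinearMap.trace ℂ V (ρ h)) I β 1)
      (nhdsWithin 0 (Set.Ioi 0))
      (nhds ((Module.finrank ℂ W : ℂ) ^ 2 / (Fintype.card G : ℂ))) := by
  classical
  obtain ⟨C, hC, hCle⟩ := hIC
  set χ : G → ℂ := fun h => LinearMap.trace ℂ V (ρ h) with hχdef
  have hχabs : ∀ h : G, ‖χ h‖ ≤ Module.finrank ℂ V :=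
    fun h => pleth_rep_abs_trace_le ρ h
  have hχre : ∀ h : G, (χ h).re ≤ Module.finrank ℂ V :=
    fun h => pleth_rep_re_trace_le ρ h
  have hχ1 : χ 1 = ((Module.finrank ℂ V : ℕ) : ℂ) := by
    show LinearMap.trace ℂ V (ρ 1) = _
    rw [_root_.map_one, LinearMap.trace_one]
  have hsumAbs : ∀ β : ℝ, 0 < β → ∀ g : G, Summable (fun n => |rT χ I β g n|) := by
    intro β hβ g
    exact Summable.of_nonneg_of_le (fun n => abs_nonneg _)
      (fun n => rT_abs_le hχabs hI0 hCle hβ g n)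
      ((summable_pow_neg_d hd).mul_left _)
  have hsum : ∀ β : ℝ, 0 < β → ∀ g : G, Summable (rT χ I β g) :=
    fun β hβ g => (hsumAbs β hβ g).of_abs
  have part1 : ∀ β : ℝ, 0 < β → ∀ g : G,
      Summable (fun n : ℕ => ‖plethTerm χ I β g n‖) := by
    intro β hβ g
    refine (hsumAbs β hβ g).congr fun n => ?_
    rw [plethTerm_eq_rT, Complex.norm_real, Real.norm_eq_abs]
  refine ⟨part1, ?_⟩
  have hZ : ∀ β : ℝ, ∀ g : G,
      plethZ χ I β g = Complex.exp (((∑' n, rT χ I β g n : ℝ) : ℂ)) := by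
    intro β g
    rw [plethZ, Complex.ofReal_tsum]
    exact congrArg Complex.exp (tsum_congr fun n => plethTerm_eq_rT χ I β g n)
  set Rt : G → ℝ → ℂ := fun g β => plethZ χ I β g / plethZ χ I β 1 with hRtdef
  have hRt1 : ∀ β, Rt 1 β = 1 := by
    intro β
    simp only [hRtdef]
    exact div_self (by rw [hZ]; exact Complex.exp_ne_zero _)
  have hRtlim0 : ∀ g : G, g ≠ 1 → Tendsto (Rt g) (nhdsWithin 0 (Set.Ioi 0)) (nhds 0) := by
    intro g hg
    have hρg : ρ g ≠ 1 := by
      intro h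
      exact hg (hfaith (by rw [h, _root_.map_one]))
    have hlt : (χ g).re < Module.finrank ℂ V := pleth_rep_re_trace_lt ρ g hρg
    set ε : ℝ := 2 * ((Module.finrank ℂ V : ℝ) - (χ g).re) with hεdef
    have hε : 0 < ε := by rw [hεdef]; linarith
    have hbound : ∀ β : ℝ, 0 < β → ‖Rt g β‖ ≤ Real.exp (-(ε * I β)) := by
      intro β hβ
      have hsg := hsum β hβ g
      have hs1 := hsum β hβ 1
      have hD : Summable (fun n => rT χ I β g n - rT χ I β 1 n) := hsg.sub hs1
      have hr1 : ∀ n : ℕ, rT χ I β 1 n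
          = (1 / ((n : ℝ) + 1)) * (2 * (Module.finrank ℂ V : ℝ)) * I (((n : ℝ) + 1) * β) := by
        intro n
        rw [rT, one_pow, hχ1]
        norm_num
      have hDle : ∀ n, rT χ I β g n - rT χ I β 1 n ≤ 0 := by
        intro n
        have hxβ : (0:ℝ) < ((n:ℝ)+1) * β := by positivity
        have h2 : (χ (g ^ (n+1))).re ≤ (Module.finrank ℂ V : ℝ) := hχre _
        have hI' := hI0 _ hxβ
        rw [rT, hr1 n]
        have hmono := mul_le_mul_of_nonneg_right
          (mul_le_mul_of_nonneg_left
            (by linarith : 2 * (χ (g ^ (n+1))).re ≤ 2 * (Module.finrank ℂ V : ℝ))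
            (by positivity : (0:ℝ) ≤ 1/((n:ℝ)+1))) hI'
        linarith
      have h00 : rT χ I β g 0 - rT χ I β 1 0 = -(ε * I β) := by
        rw [rT, hr1 0, hεdef]
        norm_num
        ring
      have htsum_le : (∑' n, (rT χ I β g n - rT χ I β 1 n)) ≤ -(ε * I β) := by
        have hneg : Summable (fun n => -(rT χ I β g n - rT χ I β 1 n)) := hD.neg
        have hle := hneg.le_tsum 0 (fun j _ => by linarith [hDle j])
        rw [tsum_neg] at hle
        rw [← h00]
        linarith
      have hRteq : Rt g β
          = Complex.exp (((∑' n, (rT χ I β g n - rT χ I β 1 n) : ℝ) : ℂ)) := by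
        simp only [hRtdef]
        rw [hZ β g, hZ β 1, ← Complex.exp_sub, ← Complex.ofReal_sub, ← hsg.tsum_sub hs1]
      rw [hRteq, Complex.norm_exp]
      simp only [Complex.ofReal_re]
      exact Real.exp_le_exp.mpr htsum_le
    have hexp : Tendsto (fun β : ℝ => Real.exp (-(ε * I β)))
        (nhdsWithin 0 (Set.Ioi 0)) (nhds 0) := by
      have hεI : Tendsto (fun β : ℝ => ε * I β) (nhdsWithin 0 (Set.Ioi 0)) atTop :=
        (pleth_I_tendsto_atTop hd hc hIlim).const_mul_atTop hε
      have hneg : Tendsto (fun β : ℝ => -(ε * I β)) (nhdsWithin 0 (Set.Ioi 0)) atBot :=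
        tendsto_neg_atTop_atBot.comp hεI
      exact Real.tendsto_exp_atBot.comp hneg
    refine squeeze_zero_norm' ?_ hexp
    filter_upwards [self_mem_nhdsWithin] with β hβ
    exact hbound β hβ
  have hRtall : ∀ g : G, Tendsto (Rt g) (nhdsWithin 0 (Set.Ioi 0))
      (nhds (if g = 1 then 1 else 0)) := by
    intro g
    by_cases hg : g = 1
    · subst hg
      simp only [if_pos rfl]
      exact Tendsto.congr (fun β => (hRt1 β).symm) tendsto_const_nhds
    · simp only [if_neg hg]
      exact hRtlim0 g hg
  have hsumlim : Tendsto
      (fun β : ℝ => ∑ g : G, star (LinearMap.trace ℂ W (α g)) * Rt g β)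
      (nhdsWithin 0 (Set.Ioi 0))
      (nhds (∑ g : G, star (LinearMap.trace ℂ W (α g)) * (if g = 1 then 1 else 0))) :=
    tendsto_finset_sum _ fun g _ => (hRtall g).const_mul _
  have hKlim := hsumlim.const_mul ((Module.finrank ℂ W : ℂ) / (Fintype.card G : ℂ))
  have hval : ((Module.finrank ℂ W : ℂ) / (Fintype.card G : ℂ)) *
      (∑ g : G, star (LinearMap.trace ℂ W (α g)) * (if g = 1 then 1 else 0))
      = (Module.finrank ℂ W : ℂ) ^ 2 / (Fintype.card G : ℂ) := by
    have hsum1 : (∑ g : G, star (LinearMap.trace ℂ W (α g)) * (if g = 1 then 1 else 0))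
        = star (LinearMap.trace ℂ W (α 1)) := by
      rw [Finset.sum_eq_single 1]
      · simp
      · intro b _ hb
        simp [hb]
      · intro h
        exact absurd (Finset.mem_univ 1) h
    rw [hsum1, _root_.map_one, LinearMap.trace_one]
    rw [star_natCast, sq, div_mul_eq_mul_div]
  rw [hval] at hKlim
  refine Tendsto.congr (fun β => ?_) hKlim
  rw [mul_div_assoc, Finset.sum_div]
  congr 1
  refine Finset.sum_congr rfl fun g _ => ?_
  rw [mul_div_assoc]
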